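/- Let d be a strictly positive probability distribution on Ω = {1,...,n} with non-increasing components, and let M be a real n×n matrix. Then M is a convex combination of the identity and the d-swaps P^d(i,j) (1 ≤ i < j ≤ n) if and only if: M is stochastic, M satisfies detailed balance with respect to d, and there exists λ ∈ [0,1] such that for every 1 ≤ i ≤ n, M_{i,i} = λ + Σ_{i<j≤n} (1 - d_j/d_i) M_{i,j} + Σ_{1≤k<j≤n, k≠i, j≠i} M_{k,j}. -/
import Mathlib


open Matrix BigOperators

/-- The `d`-swap `P^d(i,j)`: the identity except on the pair `{i,j}`, where it has
entries `(i,i) = 1 - d j / d i`, `(i,j) = 1`, `(j,i) = d j / d i`, `(j,j) = 0`. -/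
noncomputable def Pswap {n : ℕ} (d : Fin n → ℝ) (i j : Fin n) : Matrix (Fin n) (Fin n) ℝ :=
  Matrix.of fun k l =>
    if k = i ∧ l = i then 1 - d j / d i
    else if k = i ∧ l = j then 1
    else if k = j ∧ l = i then d j / d i
    else if k = j ∧ l = j then 0
    else if k = l then 1 else 0

lemma Pswap_lt {n : ℕ} (d : Fin n → ℝ) {i j k l : Fin n} (hij : i < j) (hkl : k < l) :
    Pswap d i j k l = if k = i ∧ l = j then 1 else 0 := by
  simp only [Pswap, Matrix.of_apply]
  split_ifs <;> first | ring1 | (exfalso; omega)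

lemma Pswap_gt {n : ℕ} (d : Fin n → ℝ) {i j k l : Fin n} (hij : i < j) (hkl : l < k) :
    Pswap d i j k l = if k = j ∧ l = i then d j / d i else 0 := by
  simp only [Pswap, Matrix.of_apply]
  split_ifs <;> subst_vars <;> first | ring1 | (exfalso; omega)

lemma Pswap_diag {n : ℕ} (d : Fin n → ℝ) {i j k : Fin n} (hij : i < j) :
    Pswap d i j k k = if k = i then 1 - d j / d i else if k = j then 0 else 1 := by
  simp only [Pswap, Matrix.of_apply]
  split_ifs <;> subst_vars <;> first | ring1 | (exfalso; omega)

section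
variable {n : ℕ} (d : Fin n → ℝ) (lam : ℝ) (w : Fin n → Fin n → ℝ)

lemma N_apply (k l : Fin n) :
    (lam • (1 : Matrix (Fin n) (Fin n) ℝ) +
      ∑ i, ∑ j, (if i < j then w i j else 0) • Pswap d i j) k l =
    lam * (if k = l then 1 else 0) + ∑ i, ∑ j, (if i < j then w i j else 0) * Pswap d i j k l := by
  simp only [Matrix.add_apply, Matrix.sum_apply, Matrix.smul_apply, Matrix.one_apply,
    smul_eq_mul]

lemma N_lt {k l : Fin n} (hkl : k < l) :
    (lam • (1 : Matrix (Fin n) (Fin n) ℝ) +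
      ∑ i, ∑ j, (if i < j then w i j else 0) • Pswap d i j) k l = w k l := by
  rw [N_apply, if_neg (ne_of_lt hkl), mul_zero, zero_add]
  have h : ∀ i j : Fin n, (if i < j then w i j else 0) * Pswap d i j k l
      = if i = k then (if j = l then w k l else 0) else 0 := by
    intro i j
    by_cases hij : i < j
    · rw [if_pos hij, Pswap_lt d hij hkl]
      split_ifs <;> subst_vars <;> first | ring1 | (exfalso; omega)
    · rw [if_neg hij, zero_mul]
      split_ifs <;> subst_vars <;> first | rfl | (exfalso; omega)
  simp only [h]
  simp

lemma N_gt {k l : Fin n} (hkl : l < k) :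
    (lam • (1 : Matrix (Fin n) (Fin n) ℝ) +
      ∑ i, ∑ j, (if i < j then w i j else 0) • Pswap d i j) k l = w l k * (d k / d l) := by
  rw [N_apply, if_neg (ne_of_gt hkl), mul_zero, zero_add]
  have h : ∀ i j : Fin n, (if i < j then w i j else 0) * Pswap d i j k l
      = if i = l then (if j = k then w l k * (d k / d l) else 0) else 0 := by
    intro i j
    by_cases hij : i < j
    · rw [if_pos hij, Pswap_gt d hij hkl]
      split_ifs <;> subst_vars <;> first | ring1 | (exfalso; omega)
    · rw [if_neg hij, zero_mul]
      split_ifs <;> subst_vars <;> first | rfl | (exfalso; omega)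
  simp only [h]
  simp

lemma N_diag (k : Fin n) :
    (lam • (1 : Matrix (Fin n) (Fin n) ℝ) +
      ∑ i, ∑ j, (if i < j then w i j else 0) • Pswap d i j) k k =
    lam + (∑ j, if k < j then (1 - d j / d k) * w k j else 0) +
      ∑ i, ∑ j, (if i < j ∧ i ≠ k ∧ j ≠ k then w i j else 0) := by
  rw [N_apply, if_pos rfl, mul_one, add_assoc]
  congr 1
  have h : ∀ i j : Fin n, (if i < j then w i j else 0) * Pswap d i j k k
      = (if i = k then (if k < j then (1 - d j / d k) * w k j else 0) else 0) +
        (if i < j ∧ i ≠ k ∧ j ≠ k then w i j else 0) := by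
    intro i j
    by_cases hij : i < j
    · rw [if_pos hij, Pswap_diag d hij]
      split_ifs <;> subst_vars <;> first | ring1 | (exfalso; omega)
    · rw [if_neg hij, zero_mul]
      split_ifs <;> subst_vars <;> first | ring1 | (exfalso; omega)
  simp only [h, Finset.sum_add_distrib]
  congr 1
  simp

lemma sum_split (f : Fin n → Fin n → ℝ) (l : Fin n) :
    ∑ i, ∑ j, (if i < j then f i j else 0) =
    (∑ j, if l < j then f l j else 0) + (∑ k, if k < l then f k l else 0) +
      ∑ i, ∑ j, (if i < j ∧ i ≠ l ∧ j ≠ l then f i j else 0) := by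
  have h : ∀ i j : Fin n, (if i < j then f i j else 0) =
      (if i = l then (if l < j then f l j else 0) else 0) +
      (if j = l then (if i < l then f i l else 0) else 0) +
      (if i < j ∧ i ≠ l ∧ j ≠ l then f i j else 0) := by
    intro i j
    split_ifs <;> subst_vars <;> first | ring1 | (exfalso; omega)
  rw [show (∑ i, ∑ j, (if i < j then f i j else 0)) = ∑ i, ∑ j,
      ((if i = l then (if l < j then f l j else 0) else 0) +
      (if j = l then (if i < l then f i l else 0) else 0) +
      (if i < j ∧ i ≠ l ∧ j ≠ l then f i j else 0)) from
    Finset.sum_congr rfl fun i _ => Finset.sum_congr rfl fun j _ => h i j]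
  simp only [Finset.sum_add_distrib]
  congr 1
  congr 1
  · simp
  · rw [Finset.sum_comm]
    simp
end

/-- characterization of the length-one ETO polytope. `M` is a convex
combination of the identity and the `d`-swaps `P^d(i,j)` (`i < j`) iff `M` is
stochastic, satisfies detailed balance w.r.t. `d`, and there is `λ ∈ [0,1]` with
`M i i = λ + ∑_{i<j} (1 - d j / d i) M i j + ∑_{k<j, k≠i, j≠i} M k j` for all `i`. -/
theorem stmt3 {n : ℕ} (d : Fin n → ℝ) (hpos : ∀ i, 0 < d i) (hsum : ∑ i, d i = 1)
    (hmono : ∀ i j : Fin n, i ≤ j → d j ≤ d i)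
    (M : Matrix (Fin n) (Fin n) ℝ) :
    (∃ (lam : ℝ) (w : Fin n → Fin n → ℝ),
        0 ≤ lam ∧ (∀ i j, 0 ≤ w i j) ∧
        lam + ∑ i, ∑ j, (if i < j then w i j else 0) = 1 ∧
        M = lam • (1 : Matrix (Fin n) (Fin n) ℝ) +
          ∑ i, ∑ j, (if i < j then w i j else 0) • Pswap d i j) ↔
      ((∀ i j, 0 ≤ M i j) ∧ (∀ j, ∑ i, M i j = 1) ∧
        (∀ k l : Fin n, M k l * d l = M l k * d k) ∧
        ∃ lam ∈ Set.Icc (0 : ℝ) 1, ∀ i : Fin n,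
          M i i = lam + (∑ j, if i < j then (1 - d j / d i) * M i j else 0) +
            ∑ k, ∑ j, (if k < j ∧ k ≠ i ∧ j ≠ i then M k j else 0)) := by
  have hd : ∀ i : Fin n, d i ≠ 0 := fun i => ne_of_gt (hpos i)
  constructor
  · rintro ⟨lam, w, hlam, hw, hconv, hM⟩
    have hMlt : ∀ {k l : Fin n}, k < l → M k l = w k l := fun {k l} h => by
      rw [hM]; exact N_lt d lam w h
    have hMgt : ∀ {k l : Fin n}, l < k → M k l = w l k * (d k / d l) := fun {k l} h => by
      rw [hM]; exact N_gt d lam w h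
    have hMdiag : ∀ k : Fin n, M k k =
        lam + (∑ j, if k < j then (1 - d j / d k) * w k j else 0) +
          ∑ i, ∑ j, (if i < j ∧ i ≠ k ∧ j ≠ k then w i j else 0) := fun k => by
      rw [hM]; exact N_diag d lam w k
    have hS : 0 ≤ ∑ i, ∑ j, (if i < j then w i j else 0) :=
      Finset.sum_nonneg fun i _ => Finset.sum_nonneg fun j _ => by
        split_ifs; exacts [hw i j, le_refl 0]
    refine ⟨?_, ?_, ?_, lam, ⟨hlam, by linarith⟩, ?_⟩
    · -- nonnegativity
      intro k l
      rcases lt_trichotomy k l with h | h | h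
      · rw [hMlt h]; exact hw k l
      · subst h
        rw [hMdiag k]
        have h1 : 0 ≤ ∑ j, if k < j then (1 - d j / d k) * w k j else 0 :=
          Finset.sum_nonneg fun j _ => by
            split_ifs with hj
            · exact mul_nonneg (by
                have := hmono k j hj.le
                have h2 : d j / d k ≤ 1 := (div_le_one (hpos k)).mpr this
                linarith) (hw k j)
            · exact le_refl 0
        have h2 : 0 ≤ ∑ i, ∑ j, (if i < j ∧ i ≠ k ∧ j ≠ k then w i j else 0) :=
          Finset.sum_nonneg fun i _ => Finset.sum_nonneg fun j _ => by
            split_ifs; exacts [hw i j, le_refl 0]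
        linarith
      · rw [hMgt h]
        exact mul_nonneg (hw l k) (div_nonneg (hpos k).le (hpos l).le)
    · -- column sums
      intro l
      have key : ∀ k : Fin n, M k l = (if k = l then M l l else 0) +
          (if k < l then w k l else 0) + (if l < k then w l k * (d k / d l) else 0) := by
        intro k
        rcases lt_trichotomy k l with h | h | h
        · rw [hMlt h, if_neg (ne_of_lt h), if_pos h, if_neg (by omega)]; ring
        · subst h; rw [if_pos rfl, if_neg (lt_irrefl _), if_neg (lt_irrefl _)]; ring
        · rw [hMgt h, if_neg (by omega), if_neg (by omega), if_pos h]; ring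
      rw [Finset.sum_congr rfl fun k _ => key k]
      simp only [Finset.sum_add_distrib, Finset.sum_ite_eq', Finset.mem_univ, if_pos]
      rw [hMdiag l]
      have hAE : (∑ j, if l < j then (1 - d j / d l) * w l j else 0) +
          (∑ k, if l < k then w l k * (d k / d l) else 0) =
          ∑ j, if l < j then w l j else 0 := by
        rw [← Finset.sum_add_distrib]
        refine Finset.sum_congr rfl fun j _ => ?_
        split_ifs <;> ring
      have hsplit := sum_split w l
      linarith [hconv]
    · -- detailed balance
      intro k l
      rcases lt_trichotomy k l with h | h | h
      · rw [hMlt h, hMgt h, mul_assoc, div_mul_cancel₀ _ (hd k)]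
      · subst h; rfl
      · rw [hMgt h, hMlt h, mul_assoc, div_mul_cancel₀ _ (hd l)]
    · -- diagonal identity
      intro i
      rw [hMdiag i]
      congr 1
      · congr 1
        refine Finset.sum_congr rfl fun j _ => ?_
        split_ifs with h
        · rw [hMlt h]
        · rfl
      · refine Finset.sum_congr rfl fun k _ => Finset.sum_congr rfl fun j _ => ?_
        split_ifs with h
        · rw [hMlt h.1]
        · rfl
  · rintro ⟨hnn, hcol, hdb, lam, ⟨hlam0, hlam1⟩, hdiag⟩
    have hn : 0 < n := by
      rcases Nat.eq_zero_or_pos n with h | h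
      · subst h; simp at hsum
      · exact h
    set i0 : Fin n := ⟨0, hn⟩ with hi0
    have hgt : ∀ {k l : Fin n}, l < k → M k l = M l k * (d k / d l) := by
      intro k l _
      rw [← mul_div_assoc, eq_div_iff (hd l)]
      exact hdb k l
    have hkey : lam + ∑ i, ∑ j, (if i < j then M i j else 0) = 1 := by
      have hc := hcol i0
      have key : ∀ k : Fin n, M k i0 = (if k = i0 then M i0 i0 else 0) +
          (if k < i0 then M k i0 else 0) + (if i0 < k then M i0 k * (d k / d i0) else 0) := by
        intro k
        rcases lt_trichotomy k i0 with h | h | h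
        · rw [if_neg (ne_of_lt h), if_pos h, if_neg (by omega)]; ring
        · subst h; rw [if_pos rfl, if_neg (lt_irrefl _), if_neg (lt_irrefl _)]; ring
        · rw [hgt h, if_neg (by omega), if_neg (by omega), if_pos h]; ring
      rw [Finset.sum_congr rfl fun k _ => key k] at hc
      simp only [Finset.sum_add_distrib, Finset.sum_ite_eq', Finset.mem_univ, if_pos] at hc
      rw [hdiag i0] at hc
      have hAE : (∑ j, if i0 < j then (1 - d j / d i0) * M i0 j else 0) +
          (∑ k, if i0 < k then M i0 k * (d k / d i0) else 0) =
          ∑ j, if i0 < j then M i0 j else 0 := by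
        rw [← Finset.sum_add_distrib]
        refine Finset.sum_congr rfl fun j _ => ?_
        split_ifs <;> ring
      have hsplit := sum_split M i0
      linarith
    refine ⟨lam, M, hlam0, hnn, hkey, ?_⟩
    ext k l
    rcases lt_trichotomy k l with h | h | h
    · rw [N_lt d lam M h]
    · subst h
      rw [N_diag d lam M k]
      exact hdiag k
    · rw [N_gt d lam M h]
      exact hgt h
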